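/- Let λ ∈ ℝ and let ν be a symmetric 2×2 real matrix. For a symmetric positive definite 2×2 matrix G set J(G) := √(det G) · J₀ · G⁻¹ where J₀ = [[0,−1],[1,0]]. Then the second derivative at t = 0 of the map t ↦ J₀ᵗ · J(e^{2λ}·I₂ + t·ν) equals 2·e^{−4λ}·ν⁰·ν + e^{−4λ}·det(ν⁰)·I₂, where ν⁰ := ν − (tr ν / 2)·I₂ is the trace-free part of ν. -/

import Mathlib

open Matrix

/-- The standard rotation matrix `J₀ = [[0,−1],[1,0]]`. -/
def J0 : Matrix (Fin 2) (Fin 2) ℝ := !![0, -1; 1, 0]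

/-- The matrix `J(G) = √(det G) · J₀ · G⁻¹` of the Hodge star operator of the
metric `G` acting on `1`-forms. -/
noncomputable def hodgeJ (G : Matrix (Fin 2) (Fin 2) ℝ) : Matrix (Fin 2) (Fin 2) ℝ :=
  Real.sqrt G.det • (J0 * G⁻¹)

/-- The trace-free part `ν⁰ = ν − (tr ν / 2)·I₂` of a `2 × 2` matrix. -/
noncomputable def traceFree (ν : Matrix (Fin 2) (Fin 2) ℝ) : Matrix (Fin 2) (Fin 2) ℝ :=
  ν - (ν.trace / 2) • 1

/-- equation (II.21zza) of the paper. For `λ ∈ ℝ` and `ν` a symmetric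
`2 × 2` real matrix, the map `t ↦ J₀ᵗ·J(e^{2λ}·I₂ + t·ν)` has second derivative
`2·e^{−4λ}·ν⁰·ν + e^{−4λ}·det(ν⁰)·I₂` at `t = 0` (entrywise). -/
lemma q_hasDeriv (E P D : ℝ) (t : ℝ) :
    HasDerivAt (fun t : ℝ => E^2 + t*P + t^2*D) (P + 2*t*D) t := by
  have h1 : HasDerivAt (fun t : ℝ => E^2 + t*P) P t := by
    simpa using ((hasDerivAt_id t).mul_const P).const_add (E^2)
  have h2 : HasDerivAt (fun t : ℝ => t^2*D) (2*t*D) t := by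
    have := (hasDerivAt_pow 2 t).mul_const D
    simpa [mul_assoc] using this
  exact h1.add h2

lemma hodge_entry (G : Matrix (Fin 2) (Fin 2) ℝ) (hG : 0 < G.det) (i j : Fin 2) :
    (J0ᵀ * hodgeJ G) i j = G.adjugate i j / Real.sqrt G.det := by
  have hJ : J0ᵀ * J0 = 1 := by
    ext i j
    fin_cases i <;> fin_cases j <;>
      simp [J0, Matrix.mul_apply, Matrix.transpose_apply, Fin.sum_univ_two, Matrix.one_apply, Matrix.vecHead, Matrix.vecTail]
  have h1 : J0ᵀ * hodgeJ G = Real.sqrt G.det • G⁻¹ := by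
    rw [hodgeJ, Matrix.mul_smul, ← Matrix.mul_assoc, hJ, Matrix.one_mul]
  rw [h1, Matrix.inv_def, Ring.inverse_eq_inv']
  have hs : 0 < Real.sqrt G.det := Real.sqrt_pos.2 hG
  have hd : G.det = Real.sqrt G.det * Real.sqrt G.det := (Real.mul_self_sqrt hG.le).symm
  simp only [Matrix.smul_apply, smul_eq_mul]
  rw [show G.det⁻¹ = (√G.det * √G.det)⁻¹ by rw [Real.mul_self_sqrt hG.le]]
  field_simp

lemma second_deriv_aux (A M P D E : ℝ) (hE : 0 < E) (f : ℝ → ℝ)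
    (hf : ∀ t : ℝ, 0 < E^2 + t*P + t^2*D →
      f t = (A + t*M) / Real.sqrt (E^2 + t*P + t^2*D)) :
    deriv (deriv f) 0 = (-(M*P) - A*D)/E^3 + 3*A*P^2/(4*E^5) := by
  have hcont : Continuous fun t : ℝ => E^2 + t*P + t^2*D := by fun_prop
  have hs_open : IsOpen {t : ℝ | 0 < E^2 + t*P + t^2*D} :=
    isOpen_lt continuous_const hcont
  have h0mem : (0:ℝ) ∈ {t : ℝ | 0 < E^2 + t*P + t^2*D} := by
    simp only [Set.mem_setOf_eq]
    nlinarith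
  have hu : ∀ t : ℝ, HasDerivAt (fun t : ℝ => A + t*M) M t := fun t => by
    simpa using ((hasDerivAt_id t).mul_const M).const_add A
  set f1 : ℝ → ℝ := fun t => M / Real.sqrt (E^2 + t*P + t^2*D)
      - (A + t*M) * (P + 2*t*D) / (2 * (Real.sqrt (E^2 + t*P + t^2*D))^3) with hf1_def
  have key : ∀ t ∈ {t : ℝ | 0 < E^2 + t*P + t^2*D}, HasDerivAt f (f1 t) t := by
    intro t ht
    have hqt : 0 < E^2 + t*P + t^2*D := ht
    have hst : 0 < Real.sqrt (E^2 + t*P + t^2*D) := Real.sqrt_pos.2 hqt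
    have hsq : HasDerivAt (fun t : ℝ => Real.sqrt (E^2 + t*P + t^2*D))
        ((P + 2*t*D)/(2*Real.sqrt (E^2 + t*P + t^2*D))) t :=
      (q_hasDeriv E P D t).sqrt hqt.ne'
    have hg : HasDerivAt (fun t : ℝ => (A + t*M)/Real.sqrt (E^2 + t*P + t^2*D))
        ((M * Real.sqrt (E^2 + t*P + t^2*D)
          - (A + t*M) * ((P + 2*t*D)/(2*Real.sqrt (E^2 + t*P + t^2*D))))
          / (Real.sqrt (E^2 + t*P + t^2*D))^2) t :=
      (hu t).div hsq hst.ne'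
    have heq : f =ᶠ[nhds t] fun t : ℝ => (A + t*M)/Real.sqrt (E^2 + t*P + t^2*D) := by
      filter_upwards [hs_open.mem_nhds ht] with x hx
      exact hf x hx
    have hg' : HasDerivAt f
        ((M * Real.sqrt (E^2 + t*P + t^2*D)
          - (A + t*M) * ((P + 2*t*D)/(2*Real.sqrt (E^2 + t*P + t^2*D))))
          / (Real.sqrt (E^2 + t*P + t^2*D))^2) t := hg.congr_of_eventuallyEq heq
    have halg : ∀ v w c M' : ℝ, v ≠ 0 →
        (M'*v - w*(c/(2*v)))/v^2 = M'/v - w*c/(2*v^3) := by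
      intros v w c M' hv; field_simp
    convert hg' using 1
    exact (halg _ _ _ _ hst.ne').symm
  have hderiv_ev : deriv f =ᶠ[nhds 0] f1 := by
    filter_upwards [hs_open.mem_nhds h0mem] with t ht
    exact (key t ht).deriv
  rw [Filter.EventuallyEq.deriv_eq hderiv_ev]
  -- now compute deriv f1 0
  have hq00 : E^2 + 0*P + 0^2*D = E^2 := by ring
  have hsqrt0 : Real.sqrt (E^2 + 0*P + 0^2*D) = E := by
    rw [hq00]; exact Real.sqrt_sq hE.le
  have hsq0 : HasDerivAt (fun t : ℝ => Real.sqrt (E^2 + t*P + t^2*D)) (P/(2*E)) 0 := by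
    have h := (q_hasDeriv E P D 0).sqrt (by rw [hq00]; positivity)
    simpa [Real.sqrt_sq hE.le] using h
  have hEne : E ≠ 0 := hE.ne'
  have h1 : HasDerivAt (fun t : ℝ => M / Real.sqrt (E^2 + t*P + t^2*D))
      ((0 * E - M * (P/(2*E)))/E^2) 0 := by
    have := (hasDerivAt_const (0:ℝ) M).div hsq0 (by rw [hsqrt0]; exact hEne)
    simpa [Real.sqrt_sq hE.le, Pi.div_def] using this
  have hw2 : HasDerivAt (fun t : ℝ => P + 2*t*D) (2*D) 0 := by
    have h : HasDerivAt (fun t : ℝ => 2*t*D) (2*D) 0 := by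
      simpa [mul_assoc] using (((hasDerivAt_id (0:ℝ)).const_mul 2).mul_const D)
    simpa using h.const_add P
  have hnum : HasDerivAt (fun t : ℝ => (A + t*M) * (P + 2*t*D))
      (M * (P + 2*0*D) + (A + 0*M) * (2*D)) 0 := (hu 0).mul hw2
  have hden : HasDerivAt (fun t : ℝ => 2 * (Real.sqrt (E^2 + t*P + t^2*D))^3)
      (2 * ((3:ℕ) * E^2 * (P/(2*E)))) 0 := by
    have := (hsq0.pow 3).const_mul 2
    simpa [Real.sqrt_sq hE.le] using this
  have h2 : HasDerivAt (fun t : ℝ => (A + t*M) * (P + 2*t*D)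
        / (2 * (Real.sqrt (E^2 + t*P + t^2*D))^3))
      (((M * (P + 2*0*D) + (A + 0*M) * (2*D)) * (2*E^3)
        - (A + 0*M) * (P + 2*0*D) * (2 * ((3:ℕ) * E^2 * (P/(2*E))))) / (2*E^3)^2) 0 := by
    have := hnum.div hden (by rw [hsqrt0]; positivity)
    simpa [Real.sqrt_sq hE.le, Pi.div_def] using this
  have hfin : HasDerivAt f1 ((0 * E - M * (P/(2*E)))/E^2
      - ((M * (P + 2*0*D) + (A + 0*M) * (2*D)) * (2*E^3)
        - (A + 0*M) * (P + 2*0*D) * (2 * ((3:ℕ) * E^2 * (P/(2*E))))) / (2*E^3)^2) 0 :=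
    h1.sub h2
  rw [hfin.deriv]
  field_simp
  ring

theorem statement8 (l : ℝ) (ν : Matrix (Fin 2) (Fin 2) ℝ) (hν : ν.IsSymm) :
    ∀ i j : Fin 2,
      deriv (deriv
        (fun t : ℝ =>
          (J0ᵀ * hodgeJ (Real.exp (2 * l) • (1 : Matrix (Fin 2) (Fin 2) ℝ) + t • ν)) i j)) 0
      = ((2 * Real.exp (-(4 * l))) • (traceFree ν * ν)
          + (Real.exp (-(4 * l)) * (traceFree ν).det) • (1 : Matrix (Fin 2) (Fin 2) ℝ)) i j := by
  intro i j
  set E := Real.exp (2 * l) with hE_def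
  have hE : 0 < E := Real.exp_pos _
  set P := E * (ν 0 0 + ν 1 1) with hP_def
  set Dd := ν 0 0 * ν 1 1 - ν 0 1 * ν 1 0 with hD_def
  have hdet : ∀ t : ℝ, (E • (1 : Matrix (Fin 2) (Fin 2) ℝ) + t • ν).det
      = E^2 + t*P + t^2*Dd := by
    intro t
    rw [Matrix.det_fin_two]
    simp only [Matrix.add_apply, Matrix.smul_apply, Matrix.one_apply, hP_def, hD_def,
      smul_eq_mul]
    norm_num
    ring
  have hsym : ν 1 0 = ν 0 1 := hν.apply 0 1
  have h4 : E^2 = Real.exp (4*l) := by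
    rw [hE_def, sq, ← Real.exp_add]; congr 1; ring
  have hexp2 : Real.exp (-(4*l)) = (E^2)⁻¹ := by rw [h4, ← Real.exp_neg]
  have hrhs : ∀ i' j' : Fin 2, ((2 * Real.exp (-(4 * l))) • (traceFree ν * ν)
      + (Real.exp (-(4 * l)) * (traceFree ν).det) • (1 : Matrix (Fin 2) (Fin 2) ℝ)) i' j'
      = (E^2)⁻¹ * (2 * ((traceFree ν * ν) i' j') + (traceFree ν).det * (if i' = j' then 1 else 0)) := by
    intro i' j'
    simp only [Matrix.add_apply, Matrix.smul_apply, Matrix.one_apply, smul_eq_mul, hexp2]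
    ring
  have hkey : ∀ (A M : ℝ),
      (∀ t : ℝ, 0 < E^2 + t*P + t^2*Dd →
        (E • (1 : Matrix (Fin 2) (Fin 2) ℝ) + t • ν).adjugate i j = A + t*M) →
      deriv (deriv (fun t : ℝ =>
          (J0ᵀ * hodgeJ (E • (1 : Matrix (Fin 2) (Fin 2) ℝ) + t • ν)) i j)) 0
        = (-(M*P) - A*Dd)/E^3 + 3*A*P^2/(4*E^5) := by
    intro A M hadj
    refine second_deriv_aux A M P Dd E hE _ ?_
    intro t ht
    have hdt : 0 < (E • (1 : Matrix (Fin 2) (Fin 2) ℝ) + t • ν).det := by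
      rw [hdet]; exact ht
    rw [hodge_entry _ hdt, hdet, hadj t ht]
  rw [hrhs]
  fin_cases i <;> fin_cases j
  · rw [hkey E (ν 1 1) (fun t ht => by
      rw [Matrix.adjugate_fin_two]
      simp [Matrix.add_apply, Matrix.smul_apply, Matrix.one_apply]
      try ring)]
    simp only [traceFree, Matrix.mul_apply, Fin.sum_univ_two, Matrix.det_fin_two,
      Matrix.trace_fin_two, Matrix.sub_apply, Matrix.smul_apply, Matrix.one_apply, smul_eq_mul,
      hP_def, hD_def]
    norm_num
    field_simp
    nlinarith [hsym, sq_nonneg E, sq_nonneg (E*E)]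
  · rw [hkey (0:ℝ) (-(ν 0 1)) (fun t ht => by
      rw [Matrix.adjugate_fin_two]
      simp [Matrix.add_apply, Matrix.smul_apply, Matrix.one_apply]
      try ring)]
    simp only [traceFree, Matrix.mul_apply, Fin.sum_univ_two, Matrix.det_fin_two,
      Matrix.trace_fin_two, Matrix.sub_apply, Matrix.smul_apply, Matrix.one_apply, smul_eq_mul,
      hP_def, hD_def]
    norm_num
    field_simp
    nlinarith [hsym, sq_nonneg E, sq_nonneg (E*E)]
  · rw [hkey (0:ℝ) (-(ν 1 0)) (fun t ht => by
      rw [Matrix.adjugate_fin_two]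
      simp [Matrix.add_apply, Matrix.smul_apply, Matrix.one_apply]
      try ring)]
    simp only [traceFree, Matrix.mul_apply, Fin.sum_univ_two, Matrix.det_fin_two,
      Matrix.trace_fin_two, Matrix.sub_apply, Matrix.smul_apply, Matrix.one_apply, smul_eq_mul,
      hP_def, hD_def]
    norm_num
    field_simp
    nlinarith [hsym, sq_nonneg E, sq_nonneg (E*E)]
  · rw [hkey E (ν 0 0) (fun t ht => by
      rw [Matrix.adjugate_fin_two]
      simp [Matrix.add_apply, Matrix.smul_apply, Matrix.one_apply]
      try ring)]
    simp only [traceFree, Matrix.mul_apply, Fin.sum_univ_two, Matrix.det_fin_two,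
      Matrix.trace_fin_two, Matrix.sub_apply, Matrix.smul_apply, Matrix.one_apply, smul_eq_mul,
      hP_def, hD_def]
    norm_num
    field_simp
    nlinarith [hsym, sq_nonneg E, sq_nonneg (E*E)]
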